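/- (Special chain rule) Let g ∈ K{{x}} with ord_x(g) ≥ 1 and suppose g' = 1 + g, where g' = (d/dx)(g). Then for every f ∈ K{{x}}, (d/dx)(f(g(x))) = f'(g(x)) + ((x d/dx)(f))(g(x)) = (((1+x) d/dx)(f))(g(x)), where f(g(x)) = φ_g(f) denotes substitution of g for x in f. -/

import Mathlib

namespace Planar

inductive PVar : Type
  | vx : PVar
  | vy : PVar
deriving DecidableEq

/-- A finite planar reduced rooted tree: every internal vertex has at least two
(ordered) children, encoded as `node t₁ t₂ rest` with children list `t₁ :: t₂ :: rest`;
leaves are labeled by a variable (an isomorphism class of such a labeled tree is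
faithfully represented by this inductive data). -/
inductive PTree : Type
  | leaf : PVar → PTree
  | node : PTree → PTree → List PTree → PTree

namespace PTree

/-- The number of leaves carrying the label `v`. -/
def countLeaf (v : PVar) : PTree → ℕ
  | .leaf w => if w = v then 1 else 0
  | .node t1 t2 rest =>
      countLeaf v t1 + countLeaf v t2 + (rest.attach.map fun t => countLeaf v t.1).sum
decreasing_by
  all_goals simp_wf
  · omega
  · omega
  · have := List.sizeOf_lt_of_mem t.2
    omega

end PTree

/-- `P'(x,y)`: planar monomials plus the empty tree `1_P` (= `none`). -/
abbrev PT := Option PTree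

/-- `deg_x`: the number of leaves labeled `x`. -/
def degx (S : PT) : ℕ := S.elim 0 (PTree.countLeaf .vx)

/-- `deg_y`: the number of leaves labeled `y`. -/
def degy (S : PT) : ℕ := S.elim 0 (PTree.countLeaf .vy)

/-- `m`-ary grafting `•_m` on `P'(x,y)` (`m = l.length`): join the non-trivial entries
at a new root; the conventions `•_m(1_P,…,1_P) = 1_P`, dropping of `1_P`-entries and
`•_2(S,1_P) = •_2(1_P,S) = S` amount to discarding the `1_P`-entries first. -/
def graft (l : List PT) : PT :=
  match l.reduceOption with
  | [] => none
  | [t] => some t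
  | t1 :: t2 :: ts => some (.node t1 t2 ts)

variable (K : Type) [Field K]

/-- The algebra `K{{x,y}` of planar power series in `x` and polynomials in `y`:
functions on `P'(x,y)` such that for every `n` only finitely many monomials of
`x`-degree `n` have a nonzero coefficient. -/
def PSer : Type := {f : PT → K // ∀ n : ℕ, {S : PT | f S ≠ 0 ∧ degx S = n}.Finite}

variable {K}

namespace PSer

private lemma finite_add (f g : PSer K) (n : ℕ) :
    {S : PT | f.1 S + g.1 S ≠ 0 ∧ degx S = n}.Finite := by
  apply ((f.2 n).union (g.2 n)).subset
  rintro S ⟨hne, hdeg⟩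
  by_cases h1 : f.1 S = 0
  · exact Or.inr ⟨by simpa [h1] using hne, hdeg⟩
  · exact Or.inl ⟨h1, hdeg⟩

private lemma finite_neg (f : PSer K) (n : ℕ) :
    {S : PT | -f.1 S ≠ 0 ∧ degx S = n}.Finite := by
  apply (f.2 n).subset
  rintro S ⟨hne, hdeg⟩
  exact ⟨by simpa using hne, hdeg⟩

private lemma finite_zero (n : ℕ) :
    {S : PT | (0 : K) ≠ 0 ∧ degx S = n}.Finite := by
  convert Set.finite_empty using 1
  ext S; simp

private lemma finite_smul (a : K) (f : PSer K) (n : ℕ) :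
    {S : PT | a * f.1 S ≠ 0 ∧ degx S = n}.Finite := by
  apply (f.2 n).subset
  rintro S ⟨hne, hdeg⟩
  exact ⟨fun h => hne (by simp [h]), hdeg⟩

noncomputable instance : AddCommGroup (PSer K) where
  add f g := ⟨fun S => f.1 S + g.1 S, finite_add f g⟩
  zero := ⟨fun _ => 0, finite_zero⟩
  neg f := ⟨fun S => -f.1 S, finite_neg f⟩
  add_assoc f g h := Subtype.ext (funext fun S => add_assoc _ _ _)
  add_comm f g := Subtype.ext (funext fun S => add_comm _ _)
  zero_add f := Subtype.ext (funext fun S => zero_add _)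
  add_zero f := Subtype.ext (funext fun S => add_zero _)
  neg_add_cancel f := Subtype.ext (funext fun S => neg_add_cancel _)
  nsmul n f := ⟨fun S => (n : K) * f.1 S, finite_smul _ f⟩
  nsmul_zero f := Subtype.ext (funext fun S => by
    show ((0 : ℕ) : K) * f.1 S = (0 : K); simp)
  nsmul_succ n f := Subtype.ext (funext fun S => by
    show ((n + 1 : ℕ) : K) * f.1 S = (n : K) * f.1 S + f.1 S; push_cast; ring)
  zsmul n f := ⟨fun S => (n : K) * f.1 S, finite_smul _ f⟩
  zsmul_zero' f := Subtype.ext (funext fun S => by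
    show ((0 : ℤ) : K) * f.1 S = (0 : K); simp)
  zsmul_succ' n f := Subtype.ext (funext fun S => by
    show ((Int.ofNat n.succ : ℤ) : K) * f.1 S = ((Int.ofNat n : ℤ) : K) * f.1 S + f.1 S
    simp only [Int.ofNat_eq_coe]; push_cast; ring)
  zsmul_neg' n f := Subtype.ext (funext fun S => by
    show ((Int.negSucc n : ℤ) : K) * f.1 S = -(((n.succ : ℤ) : K) * f.1 S)
    simp [Int.negSucc_eq]; push_cast; ring)

noncomputable instance : Module K (PSer K) where
  smul a f := ⟨fun S => a * f.1 S, finite_smul a f⟩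
  one_smul f := Subtype.ext (funext fun S => one_mul _)
  mul_smul a b f := Subtype.ext (funext fun S => mul_assoc _ _ _)
  smul_zero a := Subtype.ext (funext fun S => mul_zero _)
  smul_add a f g := Subtype.ext (funext fun S => mul_add _ _ _)
  add_smul a b f := Subtype.ext (funext fun S => add_mul _ _ _)
  zero_smul f := Subtype.ext (funext fun S => zero_mul _)

@[simp] lemma add_coeff (f g : PSer K) (S : PT) : (f + g).1 S = f.1 S + g.1 S := rfl
@[simp] lemma smul_coeff (a : K) (f : PSer K) (S : PT) : (a • f).1 S = a * f.1 S := rfl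
@[simp] lemma zero_coeff (S : PT) : (0 : PSer K).1 S = 0 := rfl

end PSer

open PSer

/-- The indicator series of a single planar monomial `S ∈ P'(x,y)`. -/
noncomputable def mono (S : PT) : PSer K := by
  classical
  refine ⟨fun T => if T = S then 1 else 0, fun n => (Set.finite_singleton S).subset ?_⟩
  rintro T ⟨h1, -⟩
  by_contra hc
  exact h1 (if_neg (by simpa [Set.mem_singleton_iff] using hc))

/-- The unit series `1_P` (the empty tree). -/
noncomputable def onePS : PSer K := mono none

/-- The series `x` (the one-vertex tree labeled `x`). -/
noncomputable def Xps : PSer K := mono (some (.leaf .vx))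

/-- The series `y = dx` (the one-vertex tree labeled `y`). -/
noncomputable def Yps : PSer K := mono (some (.leaf .vy))

/-- Coefficient of the product `•_m(f₁,…,f_m)` at `S`: the (finite) sum of
`c_{S₁}(f₁)⋯c_{S_m}(f_m)` over all decompositions `S = •_m(S₁,…,S_m)`. -/
noncomputable def bulletCoeff (fs : List (PSer K)) (S : PT) : K :=
  ∑ᶠ t ∈ {t : List PT | t.length = fs.length ∧ graft t = S},
    (List.zipWith (fun f u => f.1 u) fs t).prod

open Classical in
/-- The `m`-ary product `•_m(f₁,…,f_m)` on `K{{x,y}` (`m = fs.length`). -/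
noncomputable def bullet (fs : List (PSer K)) : PSer K :=
  if h : ∀ n : ℕ, {S : PT | bulletCoeff fs S ≠ 0 ∧ degx S = n}.Finite
  then ⟨bulletCoeff fs, h⟩ else 0

/-- The `x`-order `ord_x(f) ∈ ℕ ∪ {∞}`: the least `x`-degree of a monomial with
nonzero coefficient (`∞` for `f = 0`). -/
noncomputable def ordx (f : PSer K) : ℕ∞ :=
  ⨅ S ∈ {S : PT | f.1 S ≠ 0}, (degx S : ℕ∞)

/-- The `x`-adic absolute value `|f|ₓ = (1/2)^{ord_x f}` (`= 0` for `f = 0`). -/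
noncomputable def normx (f : PSer K) : ℝ :=
  if ordx f = ⊤ then 0 else (2⁻¹ : ℝ) ^ (ordx f).toNat

/-- The `x`-adic distance `|f - g|ₓ`. -/
noncomputable def distx (f g : PSer K) : ℝ := normx (f - g)

/-- A Cauchy sequence for the `x`-adic distance. -/
def IsCauchySeq (u : ℕ → PSer K) : Prop :=
  ∀ ε : ℝ, 0 < ε → ∃ N : ℕ, ∀ p q : ℕ, N ≤ p → N ≤ q → distx (u p) (u q) < ε

/-- Convergence of a sequence to `f` for the `x`-adic distance. -/
def TendstoSeq (u : ℕ → PSer K) (f : PSer K) : Prop :=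
  ∀ ε : ℝ, 0 < ε → ∃ N : ℕ, ∀ p : ℕ, N ≤ p → distx (u p) f < ε

/-- Continuity of a map between two spaces equipped with distance functions. -/
def ContWrt {α β : Type*} (dα : α → α → ℝ) (dβ : β → β → ℝ) (φ : α → β) : Prop :=
  ∀ a : α, ∀ ε : ℝ, 0 < ε → ∃ δ : ℝ, 0 < δ ∧ ∀ b : α, dα b a < δ → dβ (φ b) (φ a) < ε

/-- The property of being supported on monomials all of whose leaves are labeled `x`. -/
def OnlyX (f : PSer K) : Prop := ∀ S : PT, f.1 S ≠ 0 → degy S = 0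

variable (K) in
/-- `K{{x}}`, the closed unital subalgebra of `K{{x,y}` generated by `x`, as a
submodule: the series supported on `1_P` and trees all of whose leaves are labeled `x`. -/
noncomputable def kxSub : Submodule K (PSer K) where
  carrier := {f | OnlyX f}
  add_mem' := by
    intro f g hf hg S hS
    by_cases h1 : f.1 S = 0
    · exact hg S (by simpa [h1] using hS)
    · exact hf S h1
  zero_mem' := by intro S hS; simp at hS
  smul_mem' := by
    intro a f hf S hS
    exact hf S (fun h => hS (by simp [h]))

variable (K) in
/-- The space `K{{x}}` of planar power series in `x`. -/
abbrev Kx : Type _ := ↥(kxSub K)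

@[simp] lemma mem_kxSub {f : PSer K} : f ∈ kxSub K ↔ OnlyX f := Iff.rfl

/-- The `x`-adic distance on `K{{x}}`. -/
noncomputable def distKx (f g : Kx K) : ℝ := distx f.1 g.1

lemma onePS_mem_kxSub : onePS ∈ kxSub (K := K) := by
  intro S hS
  by_cases h : S = none
  · subst h; rfl
  · exact absurd (if_neg h) hS

lemma Xps_mem_kxSub : Xps ∈ kxSub (K := K) := by
  intro S hS
  by_cases h : S = some (.leaf .vx)
  · subst h; simp [degy, PTree.countLeaf]
  · exact absurd (if_neg h) hS

/-- `1_P` as an element of `K{{x}}`. -/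
noncomputable def oneX : Kx K := ⟨onePS, onePS_mem_kxSub⟩

/-- `x` as an element of `K{{x}}`. -/
noncomputable def xX : Kx K := ⟨Xps, Xps_mem_kxSub⟩

open Classical in
/-- The `m`-ary product `•_m` on `K{{x}}` (`m = fs.length`). -/
noncomputable def bulletX (fs : List (Kx K)) : Kx K :=
  if h : bullet (fs.map (fun f => f.1)) ∈ kxSub K
  then ⟨bullet (fs.map (fun f => f.1)), h⟩ else 0

open Classical in
/-- The homogeneous component of degree `n` (w.r.t. `deg_x`) of a planar power series. -/
noncomputable def comp (f : PSer K) (n : ℕ) : PSer K :=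
  ⟨fun S => if degx S = n then f.1 S else 0, by
    intro m
    apply (f.2 m).subset
    rintro S ⟨h1, h2⟩
    refine ⟨?_, h2⟩
    by_cases hd : degx S = n
    · simpa [hd] using h1
    · simp [hd] at h1⟩

/-- The homogeneous component of degree `n` of an element of `K{{x}}`. -/
noncomputable def compX (f : Kx K) (n : ℕ) : Kx K :=
  ⟨comp f.1 n, by
    intro S hS
    apply (mem_kxSub.mp f.2) S
    simp only [comp] at hS
    by_cases hd : degx S = n
    · simpa [hd] using hS
    · simp [hd] at hS⟩

/-- A substitution homomorphism `φ_{(g,h)} : K{{x,y} → K{{x,y}`: `K`-linear, compatible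
with all grafting operations `•_m` (`m ≥ 2`), unital, `x ↦ g`, `y ↦ h`, and continuous
for the `x`-adic topology. -/
structure IsSubstHom (g h : PSer K) (φ : PSer K → PSer K) : Prop where
  linear : IsLinearMap K φ
  map_graft : ∀ fs : List (PSer K), 2 ≤ fs.length → φ (bullet fs) = bullet (fs.map φ)
  map_one : φ onePS = onePS
  map_X : φ Xps = g
  map_Y : φ Yps = h
  cont : ContWrt distx distx φ

/-- A substitution homomorphism `φ_g : K{{x}} → K{{x}}` with `x ↦ g`. -/
structure IsSubstHomX (g : Kx K) (φ : Kx K → Kx K) : Prop where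
  linear : IsLinearMap K φ
  map_graft : ∀ fs : List (Kx K), 2 ≤ fs.length → φ (bulletX fs) = bulletX (fs.map φ)
  map_one : φ oneX = oneX
  map_X : φ xX = g
  cont : ContWrt distKx distKx φ

/-- The universal derivation `d : K{{x}} → K{{x,y}`: continuous, `K`-linear, `d x = y`,
and satisfying the Leibniz rule for every grafting operation `•_m` (`m ≥ 2`). -/
structure IsUDeriv (d : Kx K → PSer K) : Prop where
  linear : IsLinearMap K d
  cont : ContWrt distKx distx d
  map_X : d xX = Yps
  leibniz : ∀ fs : List (Kx K), 2 ≤ fs.length →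
    d (bulletX fs) = ∑ i : Fin fs.length,
      bullet ((fs.map (fun f => f.1)).set i.1 (d (fs.get i)))

/-- The `k`-ary planar exponential series `Exp_k(x)`: constant coefficient `1`,
coefficient `1` at `x`, and `Exp_k(kx) = •_k(Exp_k(x),…,Exp_k(x))`. -/
structure IsExp (k : ℕ) (f : Kx K) : Prop where
  coeff_one : f.1.1 none = 1
  coeff_X : f.1.1 (some (.leaf .vx)) = 1
  funEq : ∀ φ : Kx K → Kx K, IsSubstHomX ((k : K) • xX) φ →
    φ f = bulletX (List.replicate k f)

/-- `ℓ = Log_k(1+x)`, the planar logarithm attached to a planar exponential series `e`: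
`ord_x ℓ ≥ 1` and `ℓ(e - 1) = x`. -/
structure IsLogOf (e ℓ : Kx K) : Prop where
  ord : 1 ≤ ordx ℓ.1
  eq : ∀ φ : Kx K → Kx K, IsSubstHomX (e - oneX) φ → φ ℓ = xX

variable {K : Type} [Field K]

/-! ### Strong induction for planar trees -/

theorem ptree_ind (P : PTree → Prop)
    (hleaf : ∀ v, P (.leaf v))
    (hnode : ∀ t1 t2 ts, P t1 → P t2 → (∀ t ∈ ts, P t) → P (.node t1 t2 ts)) :
    ∀ t, P t := by
  have H : ∀ n (t : PTree), sizeOf t ≤ n → P t := by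
    intro n
    induction n with
    | zero => intro t ht; cases t <;> simp at ht
    | succ n ihn =>
      intro t ht
      cases t with
      | leaf v => exact hleaf v
      | node t1 t2 ts =>
        simp only [PTree.node.sizeOf_spec] at ht
        refine hnode t1 t2 ts (ihn t1 (by omega)) (ihn t2 (by omega)) ?_
        intro t htm
        have := List.sizeOf_lt_of_mem htm
        exact ihn t (by omega)
  exact fun t => H (sizeOf t) t le_rfl

/-! ### Basic coefficient lemmas -/

open Classical in
@[simp] lemma mono_apply (S T : PT) : (mono (K := K) S).1 T = if T = S then 1 else 0 := rfl

/-- Evaluation of the coefficient at `S` as a linear map. -/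
noncomputable def coeffAt (S : PT) : PSer K →ₗ[K] K where
  toFun f := f.1 S
  map_add' _ _ := rfl
  map_smul' _ _ := rfl

lemma coeff_sum {ι : Type*} (F : Finset ι) (f : ι → PSer K) (S : PT) :
    (∑ i ∈ F, f i).1 S = ∑ i ∈ F, (f i).1 S := map_sum (coeffAt S) f F

lemma coeff_sub (f g : PSer K) (S : PT) : (f - g).1 S = f.1 S - g.1 S :=
  map_sub (coeffAt S) f g

lemma lin_sum {M N : Type*} [AddCommGroup M] [Module K M] [AddCommGroup N] [Module K N]
    {φ : M → N} (hφ : IsLinearMap K φ) {ι : Type*} (F : Finset ι) (f : ι → M) :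
    φ (∑ i ∈ F, f i) = ∑ i ∈ F, φ (f i) := map_sum (hφ.mk' φ) f F

/-! ### countLeaf and grafting -/

lemma countLeaf_node (v : PVar) (t1 t2 : PTree) (ts : List PTree) :
    PTree.countLeaf v (.node t1 t2 ts) =
      PTree.countLeaf v t1 + PTree.countLeaf v t2 + (ts.map (PTree.countLeaf v)).sum := by
  rw [PTree.countLeaf]
  simp

lemma degv_reduce (v : PVar) (t : List PT) :
    (t.map (fun S => S.elim 0 (PTree.countLeaf v))).sum
      = (t.reduceOption.map (PTree.countLeaf v)).sum := by
  induction t with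
  | nil => rfl
  | cons a l ih => cases a <;> simp [ih, List.reduceOption_cons_of_some]

lemma degv_graft (v : PVar) (t : List PT) :
    (graft t).elim 0 (PTree.countLeaf v) = (t.map (fun S => S.elim 0 (PTree.countLeaf v))).sum := by
  rw [degv_reduce]
  unfold graft
  split
  · next h => simp [h]
  · next a h => simp [h]
  · next a b l h => simp [h, countLeaf_node, Nat.add_assoc]

lemma degx_graft (t : List PT) : degx (graft t) = (t.map degx).sum := degv_graft .vx t

lemma degy_graft (t : List PT) : degy (graft t) = (t.map degy).sum := degv_graft .vy t

lemma graft_map_some (l : List PTree) (t1 t2 : PTree) (ts : List PTree) (h : l = t1 :: t2 :: ts) :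
    graft (l.map some) = some (.node t1 t2 ts) := by
  subst h
  have : (List.map some (t1 :: t2 :: ts)).reduceOption = t1 :: t2 :: ts := by
    induction ts <;> simp_all [List.reduceOption_cons_of_some]
  unfold graft
  rw [this]

/-! ### Finiteness of decompositions -/

lemma lists_finite (E : Set PT) (hE : E.Finite) :
    ∀ m : ℕ, {t : List PT | t.length = m ∧ ∀ u ∈ t, u ∈ E}.Finite := by
  intro m
  induction m with
  | zero =>
    refine (Set.finite_singleton ([] : List PT)).subset ?_
    rintro t ⟨h, -⟩
    simp [List.length_eq_zero_iff.mp h]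
  | succ m ih =>
    refine ((hE.prod ih).image (fun p => p.1 :: p.2)).subset ?_
    rintro (_ | ⟨a, l⟩) ⟨hl, hmem⟩
    · simp at hl
    · refine ⟨(a, l), ⟨hmem a (by simp), ?_, fun u hu => hmem u (by simp [hu])⟩, rfl⟩
      simpa using hl

lemma zip_prod_ne_zero {fs : List (PSer K)} {t : List PT}
    (h : (List.zipWith (fun f u => f.1 u) fs t).prod ≠ 0)
    (i : ℕ) (hi : i < fs.length) (hi' : i < t.length) :
    (fs[i]).1 (t[i]) ≠ 0 := by
  intro h0
  have hm : (List.zipWith (fun f u => f.1 u) fs t)[i]'(by simp [hi, hi']) ∈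
      List.zipWith (fun f u => f.1 u) fs t := List.getElem_mem _
  simp only [List.getElem_zipWith] at hm
  rw [h0] at hm
  exact h (List.prod_eq_zero hm)

lemma decomp_finite (fs : List (PSer K)) (n : ℕ) :
    {t : List PT | t.length = fs.length ∧ (t.map degx).sum = n ∧
      (List.zipWith (fun f u => f.1 u) fs t).prod ≠ 0}.Finite := by
  set E : Set PT := {u | ∃ f ∈ fs, f.1 u ≠ 0 ∧ degx u ≤ n} with hEdef
  have hE : E.Finite := by
    have : E ⊆ ⋃ f ∈ {f | f ∈ fs}, ⋃ d ∈ Set.Iic n, {S : PT | f.1 S ≠ 0 ∧ degx S = d} := by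
      rintro u ⟨f, hf, hne, hle⟩
      exact Set.mem_biUnion hf (Set.mem_biUnion (Set.mem_Iic.mpr hle) ⟨hne, rfl⟩)
    exact (((fs.finite_toSet).biUnion fun f _ =>
      (Set.finite_Iic n).biUnion fun d _ => f.2 d)).subset this
  refine (lists_finite E hE fs.length).subset ?_
  rintro t ⟨h1, h2, h3⟩
  refine ⟨h1, fun u hu => ?_⟩
  obtain ⟨i, hi, rfl⟩ := List.mem_iff_getElem.mp hu
  refine ⟨fs[i]'(h1 ▸ hi), List.getElem_mem _, zip_prod_ne_zero h3 i (h1 ▸ hi) hi, ?_⟩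
  calc degx t[i] ≤ (t.map degx).sum := by
        refine List.single_le_sum (by simp) _ ?_
        exact List.mem_map_of_mem (f := degx) (List.getElem_mem _)
    _ = n := h2

lemma bulletCoeff_ne_zero {fs : List (PSer K)} {S : PT} (h : bulletCoeff fs S ≠ 0) :
    ∃ t : List PT, t.length = fs.length ∧ graft t = S ∧
      (List.zipWith (fun f u => f.1 u) fs t).prod ≠ 0 := by
  obtain ⟨t, ⟨ht1, ht2⟩, ht3⟩ := exists_ne_zero_of_finsum_mem_ne_zero h
  exact ⟨t, ht1, ht2, ht3⟩

lemma bullet_finite (fs : List (PSer K)) (n : ℕ) :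
    {S : PT | bulletCoeff fs S ≠ 0 ∧ degx S = n}.Finite := by
  refine ((decomp_finite fs n).image graft).subset ?_
  rintro S ⟨h1, h2⟩
  obtain ⟨t, ht1, ht2, ht3⟩ := bulletCoeff_ne_zero h1
  exact ⟨t, ⟨ht1, by rw [← degx_graft, ht2, h2], ht3⟩, ht2⟩

lemma bullet_apply (fs : List (PSer K)) (S : PT) : (bullet fs).1 S = bulletCoeff fs S := by
  have hb : bullet fs = (⟨bulletCoeff fs, bullet_finite fs⟩ : PSer K) :=
    dif_pos (bullet_finite fs)
  rw [hb]

/-! ### Bullet of monomials -/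

open Classical in
lemma finsum_mem_single {α M : Type*} [AddCommMonoid M] {A : Set α} {F : α → M} (t₀ : α)
    (h : ∀ t ∈ A, t ≠ t₀ → F t = 0) :
    ∑ᶠ t ∈ A, F t = if t₀ ∈ A then F t₀ else 0 := by
  rw [finsum_mem_def, finsum_eq_single _ t₀]
  · simp [Set.indicator_apply]
  · intro t ht
    by_cases hA : t ∈ A
    · simp [Set.indicator_apply, hA, h t hA ht]
    · simp [Set.indicator_apply, hA]

open Classical in
lemma zip_monos_prod : ∀ (Ss t : List PT), Ss.length = t.length →
    (List.zipWith (fun f u => f.1 u) (Ss.map (mono (K := K))) t).prod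
      = if t = Ss then 1 else 0 := by
  intro Ss
  induction Ss with
  | nil =>
    rintro (_ | _) h
    · simp
    · simp at h
  | cons S Ss ih =>
    rintro (_ | ⟨u, t⟩) h
    · simp at h
    · simp only [List.map_cons, List.zipWith_cons_cons, List.prod_cons, mono_apply]
      rw [ih t (by simpa using h)]
      by_cases hu : u = S
      · subst hu
        by_cases ht : t = Ss <;> simp [ht]
      · simp [hu, fun hc : u :: t = S :: Ss => hu (by injection hc)]

open Classical in
lemma bullet_monos (Ss : List PT) : bullet (Ss.map (mono (K := K))) = mono (graft Ss) := by
  apply Subtype.ext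
  funext S
  rw [bullet_apply, mono_apply]
  unfold bulletCoeff
  rw [finsum_mem_single Ss (fun t ht hne => by
    rw [zip_monos_prod _ _ (by simpa using ht.1.symm)]
    simp [hne])]
  rw [zip_monos_prod Ss Ss rfl]
  have hmem : (Ss ∈ {t : List PT |
      t.length = (Ss.map (mono (K := K))).length ∧ graft t = S}) ↔ graft Ss = S := by
    simp
  by_cases h : graft Ss = S
  · rw [if_pos (hmem.mpr h)]
    simp [h.symm]
  · rw [if_neg (fun c => h (hmem.mp c))]
    rw [if_neg (fun c : S = graft Ss => h c.symm)]

/-! ### bullet preserves OnlyX; bulletX coefficients -/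

lemma bullet_onlyX {fs : List (PSer K)} (h : ∀ f ∈ fs, OnlyX f) : OnlyX (bullet fs) := by
  intro S hS
  rw [bullet_apply] at hS
  obtain ⟨t, ht1, rfl, hprod⟩ := bulletCoeff_ne_zero hS
  rw [degy_graft]
  apply List.sum_eq_zero
  intro x hx
  obtain ⟨u, hu, rfl⟩ := List.mem_map.mp hx
  obtain ⟨i, hi, rfl⟩ := List.mem_iff_getElem.mp hu
  exact h _ (List.getElem_mem _) _ (zip_prod_ne_zero hprod i (ht1 ▸ hi) hi)

lemma bulletX_coe (fs : List (Kx K)) :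
    (bulletX fs).1 = bullet (fs.map (fun f => f.1)) := by
  rw [bulletX, dif_pos]
  apply bullet_onlyX
  rintro f hf
  obtain ⟨g, hg, rfl⟩ := List.mem_map.mp hf
  exact g.2

/-! ### x-only monomials as elements of Kx -/

lemma mono_mem_kxSub {S : PT} (hS : degy S = 0) : mono (K := K) S ∈ kxSub K := by
  intro T hT
  by_cases h : T = S
  · subst h; exact hS
  · exact absurd (if_neg h) hT

/-- The monomial of an x-only tree, as an element of `K{{x}}` (junk value `0` otherwise). -/
noncomputable def monoXt (t : PTree) : Kx K :=
  if h : PTree.countLeaf .vy t = 0 then ⟨mono (some t), mono_mem_kxSub h⟩ else 0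

lemma monoXt_coe {t : PTree} (h : PTree.countLeaf .vy t = 0) :
    (monoXt (K := K) t).1 = mono (some t) := by
  rw [monoXt, dif_pos h]

lemma countLeaf_vy_children {t1 t2 : PTree} {ts : List PTree}
    (h : PTree.countLeaf .vy (.node t1 t2 ts) = 0) :
    PTree.countLeaf .vy t1 = 0 ∧ PTree.countLeaf .vy t2 = 0 ∧
      ∀ t ∈ ts, PTree.countLeaf .vy t = 0 := by
  rw [countLeaf_node] at h
  refine ⟨by omega, by omega, fun t ht => ?_⟩
  have h3 : (ts.map (PTree.countLeaf .vy)).sum = 0 := by omega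
  have := List.sum_eq_zero_iff.mp h3
  exact this _ (List.mem_map_of_mem ht)

lemma monoXt_node {t1 t2 : PTree} {ts : List PTree}
    (h : PTree.countLeaf .vy (.node t1 t2 ts) = 0) :
    monoXt (K := K) (.node t1 t2 ts) = bulletX ((t1 :: t2 :: ts).map monoXt) := by
  obtain ⟨h1, h2, h3⟩ := countLeaf_vy_children h
  apply Subtype.ext
  rw [monoXt_coe h, bulletX_coe, List.map_map]
  have : ((t1 :: t2 :: ts).map (fun t => (monoXt (K := K) t).1))
      = ((t1 :: t2 :: ts).map some).map (mono (K := K)) := by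
    rw [List.map_map]
    apply List.map_congr_left
    intro t ht
    simp only [Function.comp]
    simp only [List.mem_cons] at ht
    rcases ht with rfl | rfl | ht
    · exact monoXt_coe h1
    · exact monoXt_coe h2
    · exact monoXt_coe (h3 _ ht)
  simp only [Function.comp_def]
  rw [this, bullet_monos, graft_map_some _ t1 t2 ts rfl]


/-! ### Order and norm lemmas -/

lemma ordx_le {f : PSer K} {S : PT} (h : f.1 S ≠ 0) : ordx f ≤ (degx S : ℕ∞) :=
  iInf₂_le S h

lemma le_ordx {f : PSer K} {c : ℕ∞} (h : ∀ S : PT, f.1 S ≠ 0 → c ≤ (degx S : ℕ∞)) :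
    c ≤ ordx f := le_iInf₂ h

lemma eq_zero_of_ordx_top {f : PSer K} (h : ordx f = ⊤) : f = 0 := by
  apply Subtype.ext
  funext S
  by_contra hS
  have := ordx_le hS
  rw [h, top_le_iff] at this
  exact (ENat.coe_ne_top _) this

@[simp] lemma ordx_zero : ordx (0 : PSer K) = ⊤ := by
  rw [eq_top_iff]
  exact le_ordx fun S h => absurd rfl h

/-- Helper: the norm as a function of the order. -/
noncomputable def nrm (o : ℕ∞) : ℝ := if o = ⊤ then 0 else (2⁻¹ : ℝ) ^ o.toNat

lemma normx_eq_nrm (f : PSer K) : normx f = nrm (ordx f) := rfl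

lemma nrm_nonneg (o : ℕ∞) : 0 ≤ nrm o := by
  rw [nrm]
  split
  · exact le_refl 0
  · positivity

lemma nrm_antitone {a b : ℕ∞} (h : a ≤ b) : nrm b ≤ nrm a := by
  rw [nrm, nrm]
  by_cases hb : b = ⊤
  · rw [if_pos hb]
    exact nrm_nonneg a |>.trans_eq (by rw [nrm])
  · have ha : a ≠ ⊤ := fun c => hb (top_le_iff.mp (c ▸ h))
    rw [if_neg hb, if_neg ha]
    refine pow_le_pow_of_le_one (by norm_num) (by norm_num) ?_
    exact ENat.toNat_le_toNat h hb

lemma normx_nonneg (f : PSer K) : 0 ≤ normx f := nrm_nonneg _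

lemma normx_le_pow {f : PSer K} {n : ℕ} (h : ∀ S : PT, f.1 S ≠ 0 → n ≤ degx S) :
    normx f ≤ (2⁻¹ : ℝ) ^ n := by
  have ho : (n : ℕ∞) ≤ ordx f := le_ordx fun S hS => by exact_mod_cast h S hS
  calc normx f = nrm (ordx f) := rfl
    _ ≤ nrm (n : ℕ∞) := nrm_antitone ho
    _ = (2⁻¹ : ℝ) ^ n := by rw [nrm, if_neg (ENat.coe_ne_top n)]; simp

lemma eq_zero_of_normx_zero {f : PSer K} (h : normx f = 0) : f = 0 := by
  apply eq_zero_of_ordx_top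
  by_contra ho
  rw [normx, if_neg ho] at h
  exact absurd h (by positivity)

lemma min_ordx_le_add (f g : PSer K) : min (ordx f) (ordx g) ≤ ordx (f + g) := by
  apply le_ordx
  intro S hS
  by_cases hf : f.1 S = 0
  · have hg : g.1 S ≠ 0 := fun c => hS (by rw [add_coeff, hf, c, add_zero])
    exact (min_le_right _ _).trans (ordx_le hg)
  · exact (min_le_left _ _).trans (ordx_le hf)

lemma normx_add_le (f g : PSer K) : normx (f + g) ≤ max (normx f) (normx g) := by
  calc normx (f + g) = nrm (ordx (f + g)) := rfl
    _ ≤ nrm (min (ordx f) (ordx g)) := nrm_antitone (min_ordx_le_add f g)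
    _ ≤ max (normx f) (normx g) := by
        rcases min_cases (ordx f) (ordx g) with ⟨h1, -⟩ | ⟨h1, -⟩
        · rw [h1]; exact le_max_left _ _
        · rw [h1]; exact le_max_right _ _

lemma distx_triangle (f g h : PSer K) : distx f h ≤ max (distx f g) (distx g h) := by
  have : f - h = (f - g) + (g - h) := by abel
  rw [distx, this]
  exact normx_add_le _ _

@[simp] lemma distx_self (f : PSer K) : distx f f = 0 := by
  rw [distx, sub_self, normx, ordx_zero, if_pos rfl]

lemma distx_nonneg (f g : PSer K) : 0 ≤ distx f g := normx_nonneg _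

lemma eq_of_forall_distx_lt {f g : PSer K} (h : ∀ ε : ℝ, 0 < ε → distx f g < ε) : f = g := by
  have h0 : normx (f - g) = 0 := by
    rcases eq_or_lt_of_le (normx_nonneg (f - g)) with h1 | h1
    · exact h1.symm
    · exact absurd (h _ h1) (lt_irrefl _)
  have := eq_zero_of_normx_zero h0
  exact sub_eq_zero.mp this

/-! ### Slot additivity of bullet -/

lemma zipWith_set (c : PSer K → PT → K) (v : PSer K) :
    ∀ (i : ℕ) (l : List (PSer K)) (t : List PT) (hi : i < t.length),
      List.zipWith c (l.set i v) t = (List.zipWith c l t).set i (c v (t.get ⟨i, hi⟩)) := by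
  intro i
  induction i with
  | zero =>
    rintro (_ | ⟨f, l⟩) (_ | ⟨u, t⟩) hi <;> simp
  | succ i ih =>
    rintro (_ | ⟨f, l⟩) (_ | ⟨u, t⟩) hi <;> simp
    exact ih l t (by simpa using hi)

lemma prod_set_linear (L : List K) (i : ℕ) (hi : i < L.length) (a b : K) :
    (L.set i (a + b)).prod = (L.set i a).prod + (L.set i b).prod := by
  rw [List.prod_set, List.prod_set, List.prod_set]
  simp only [if_pos hi]
  ring

lemma bullet_set_add (l : List (PSer K)) (i : ℕ) (hi : i < l.length) (a b : PSer K) :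
    bullet (l.set i (a + b)) = bullet (l.set i a) + bullet (l.set i b) := by
  apply Subtype.ext
  funext S
  rw [add_coeff, bullet_apply, bullet_apply, bullet_apply]
  unfold bulletCoeff
  have hlen : ∀ v : PSer K, (l.set i v).length = l.length := fun v => List.length_set ..
  have hsets : ∀ v : PSer K, {t : List PT | t.length = (l.set i v).length ∧ graft t = S}
      = {t : List PT | t.length = l.length ∧ graft t = S} := by
    intro v; rw [hlen]
  rw [hsets, hsets, hsets]
  set A := {t : List PT | t.length = l.length ∧ graft t = S} with hA
  have key : ∀ t ∈ A, (List.zipWith (fun f u => f.1 u) (l.set i (a + b)) t).prod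
      = (List.zipWith (fun f u => f.1 u) (l.set i a) t).prod
        + (List.zipWith (fun f u => f.1 u) (l.set i b) t).prod := by
    rintro t ⟨ht1, -⟩
    have hit : i < t.length := by omega
    rw [zipWith_set _ _ _ _ _ hit, zipWith_set _ _ _ _ _ hit, zipWith_set _ _ _ _ _ hit]
    have hiL : i < (List.zipWith (fun (f : PSer K) (u : PT) => f.1 u) l t).length := by
      simp; omega
    rw [show ((a + b).1 (t.get ⟨i, hit⟩)) = a.1 (t.get ⟨i, hit⟩) + b.1 (t.get ⟨i, hit⟩) from rfl]
    exact prod_set_linear _ i hiL _ _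
  rw [finsum_mem_congr rfl key]
  apply finsum_mem_add_distrib'
  · refine ((decomp_finite (l.set i a) (degx S)).subset ?_)
    rintro t ⟨⟨ht1, ht2⟩, ht3⟩
    exact ⟨by rw [hlen]; exact ht1, by rw [← degx_graft, ht2], ht3⟩
  · refine ((decomp_finite (l.set i b) (degx S)).subset ?_)
    rintro t ⟨⟨ht1, ht2⟩, ht3⟩
    exact ⟨by rw [hlen]; exact ht1, by rw [← degx_graft, ht2], ht3⟩

/-! ### Density of polynomials -/

lemma ordx_sub_comm (f g : PSer K) : ordx (f - g) = ordx (g - f) := by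
  have key : ∀ a b : PSer K, ordx (a - b) ≤ ordx (b - a) := by
    intro a b
    apply le_ordx
    intro S hS
    apply ordx_le
    rw [coeff_sub] at hS ⊢
    intro c
    exact hS (by rw [sub_eq_zero.mp c, sub_self])
  exact le_antisymm (key f g) (key g f)

lemma distx_comm (f g : PSer K) : distx f g = distx g f := by
  rw [distx, distx, normx_eq_nrm, normx_eq_nrm, ordx_sub_comm]

/-- The monomial of an x-only planar monomial, as an element of `K{{x}}`. -/
noncomputable def monoX (S : PT) (hS : degy S = 0) : Kx K := ⟨mono S, mono_mem_kxSub hS⟩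

lemma kx_coe_sum {ι : Type*} (F : Finset ι) (f : ι → Kx K) :
    (∑ i ∈ F, f i : Kx K).1 = ∑ i ∈ F, (f i).1 := map_sum ((kxSub K).subtype) f F

open Classical in
lemma dense_eq {A B : Kx K → PSer K}
    (hA : IsLinearMap K A) (hB : IsLinearMap K B)
    (hAc : ContWrt distKx distx A) (hBc : ContWrt distKx distx B)
    (hmono : ∀ (S : PT) (hS : degy S = 0), A (monoX S hS) = B (monoX S hS)) :
    ∀ f : Kx K, A f = B f := by
  intro f
  apply eq_of_forall_distx_lt
  intro ε hε
  obtain ⟨δA, hδA, hAcont⟩ := hAc f ε hε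
  obtain ⟨δB, hδB, hBcont⟩ := hBc f ε hε
  obtain ⟨N, hN⟩ := exists_pow_lt_of_lt_one (lt_min hδA hδB) (by norm_num : (2⁻¹ : ℝ) < 1)
  have hfin : {S : PT | f.1.1 S ≠ 0 ∧ degx S ≤ N}.Finite := by
    refine (Set.Finite.biUnion (Set.finite_Iic N) (fun n _ => f.1.2 n)).subset ?_
    rintro S ⟨h1, h2⟩
    exact Set.mem_biUnion (Set.mem_Iic.mpr h2) ⟨h1, rfl⟩
  set F : Kx K := ∑ S ∈ hfin.toFinset.attach,
    f.1.1 S.1 • monoX S.1 (f.2 S.1 (hfin.mem_toFinset.mp S.2).1) with hF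
  have hFco : ∀ T : PT, F.1.1 T = if f.1.1 T ≠ 0 ∧ degx T ≤ N then f.1.1 T else 0 := by
    intro T
    rw [hF, kx_coe_sum, coeff_sum]
    have : ∀ S ∈ hfin.toFinset.attach,
        ((f.1.1 S.1 • monoX S.1 (f.2 S.1 (hfin.mem_toFinset.mp S.2).1)).1 : PSer K).1 T
          = if T = S.1 then f.1.1 S.1 else 0 := by
      intro S _
      rw [Submodule.coe_smul, smul_coeff]
      show f.1.1 S.1 * (mono S.1).1 T = _
      rw [mono_apply, mul_ite, mul_one, mul_zero]
    rw [Finset.sum_congr rfl this, Finset.sum_attach hfin.toFinset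
      (fun S => if T = S then f.1.1 S else 0), Finset.sum_ite_eq]
    by_cases hT : T ∈ hfin.toFinset
    · rw [if_pos hT, if_pos (by simpa using hT)]
    · rw [if_neg hT, if_neg (by simpa using hT)]
  have hclose : distx F.1 f.1 < min δA δB := by
    have hb : ∀ S : PT, (F.1 - f.1).1 S ≠ 0 → N + 1 ≤ degx S := by
      intro S hS
      by_contra hc
      push_neg at hc
      have hdeg : degx S ≤ N := by omega
      rw [coeff_sub, hFco] at hS
      by_cases h0 : f.1.1 S = 0
      · rw [if_neg (by simp [h0]), h0, sub_zero] at hS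
        exact hS rfl
      · rw [if_pos ⟨h0, hdeg⟩, sub_self] at hS
        exact hS rfl
    calc distx F.1 f.1 ≤ (2⁻¹ : ℝ) ^ (N + 1) := normx_le_pow hb
      _ ≤ (2⁻¹ : ℝ) ^ N := by
          apply pow_le_pow_of_le_one (by norm_num) (by norm_num) (by omega)
      _ < min δA δB := hN
  have hABF : A F = B F := by
    rw [hF, lin_sum hA, lin_sum hB]
    refine Finset.sum_congr rfl fun S _ => ?_
    rw [hA.map_smul, hB.map_smul, hmono]
  have h1 : distx (A f) (A F) < ε := by
    rw [distx_comm]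
    exact hAcont F (lt_of_lt_of_le hclose (min_le_left _ _))
  have h2 : distx (B F) (B f) < ε := by
    rw [distx_comm]
    rw [distx_comm]
    exact hBcont F (lt_of_lt_of_le hclose (min_le_right _ _))
  have h3 : distx (A F) (B f) < ε := by
    refine lt_of_le_of_lt (distx_triangle _ (B F) _) ?_
    rw [hABF, distx_self]
    rw [max_eq_right (distx_nonneg _ _)]
    exact h2
  exact lt_of_le_of_lt (distx_triangle (A f) (A F) (B f)) (max_lt h1 h3)

/-! ### Continuity and linearity helpers -/

lemma contwrt_comp {α β γ : Type*} {dα : α → α → ℝ} {dβ : β → β → ℝ} {dγ : γ → γ → ℝ}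
    {φ : α → β} {χ : β → γ} (hφ : ContWrt dα dβ φ) (hχ : ContWrt dβ dγ χ) :
    ContWrt dα dγ (fun a => χ (φ a)) := by
  intro a ε hε
  obtain ⟨δ1, hδ1, hc1⟩ := hχ (φ a) ε hε
  obtain ⟨δ2, hδ2, hc2⟩ := hφ a δ1 hδ1
  exact ⟨δ2, hδ2, fun b hb => hc1 (φ b) (hc2 b hb)⟩

lemma distKx_def (f g : Kx K) : distKx f g = distx f.1 g.1 := rfl

lemma cont_coe : ContWrt (distKx (K := K)) distx (fun f => f.1) :=
  fun _ ε hε => ⟨ε, hε, fun _ hb => hb⟩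

lemma contwrt_add {α : Type*} {dα : α → α → ℝ} {φ χ : α → PSer K}
    (hφ : ContWrt dα distx φ) (hχ : ContWrt dα distx χ) :
    ContWrt dα distx (fun a => φ a + χ a) := by
  intro a ε hε
  obtain ⟨δ1, hδ1, hc1⟩ := hφ a ε hε
  obtain ⟨δ2, hδ2, hc2⟩ := hχ a ε hε
  refine ⟨min δ1 δ2, lt_min hδ1 hδ2, fun b hb => ?_⟩
  have e : (φ b + χ b) - (φ a + χ a) = (φ b - φ a) + (χ b - χ a) := by abel
  calc distx (φ b + χ b) (φ a + χ a) = normx ((φ b - φ a) + (χ b - χ a)) := by rw [distx, e]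
    _ ≤ max (normx (φ b - φ a)) (normx (χ b - χ a)) := normx_add_le _ _
    _ < ε := max_lt (hc1 b (lt_of_lt_of_le hb (min_le_left _ _)))
        (hc2 b (lt_of_lt_of_le hb (min_le_right _ _)))

lemma contKx_of_coe {G : Kx K → Kx K} {G' : Kx K → PSer K} (h : ∀ f, (G f).1 = G' f)
    (hc : ContWrt distKx distx G') : ContWrt distKx distKx G := by
  intro a ε hε
  obtain ⟨δ, hδ, hcc⟩ := hc a ε hε
  refine ⟨δ, hδ, fun b hb => ?_⟩
  show distx (G b).1 (G a).1 < ε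
  rw [h, h]
  exact hcc b hb

/-! ### Substitution homomorphisms fix K{{x}} pointwise -/

lemma substHom_mono {h : PSer K} {ψ : PSer K → PSer K} (hψ : IsSubstHom Xps h ψ) :
    ∀ t : PTree, PTree.countLeaf .vy t = 0 → ψ (mono (some t)) = mono (some t) := by
  intro t
  induction t using ptree_ind with
  | hleaf v =>
    intro h0
    cases v
    · exact hψ.map_X
    · simp [PTree.countLeaf] at h0
  | hnode t1 t2 ts ih1 ih2 ihs =>
    intro h0
    obtain ⟨h1, h2, h3⟩ := countLeaf_vy_children h0
    have hrepr : mono (K := K) (some (.node t1 t2 ts))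
        = bullet (((t1 :: t2 :: ts).map some).map mono) := by
      rw [bullet_monos, graft_map_some _ t1 t2 ts rfl]
    have hlist : (((t1 :: t2 :: ts).map some).map (mono (K := K))).map ψ
        = ((t1 :: t2 :: ts).map some).map mono := by
      simp only [List.map_map]
      apply List.map_congr_left
      intro t ht
      simp only [Function.comp_apply]
      simp only [List.mem_cons] at ht
      rcases ht with rfl | rfl | ht
      · exact ih1 h1
      · exact ih2 h2
      · exact ihs t ht (h3 t ht)
    rw [hrepr, hψ.map_graft _ (by simp), hlist, bullet_monos, graft_map_some _ t1 t2 ts rfl]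

lemma substHom_id {h : PSer K} {ψ : PSer K → PSer K} (hψ : IsSubstHom Xps h ψ) :
    ∀ f : Kx K, ψ f.1 = f.1 := by
  have hAlin : IsLinearMap K (fun f : Kx K => ψ f.1) := by
    constructor
    · intro a b
      show ψ ((a : PSer K) + (b : PSer K)) = _
      rw [hψ.linear.map_add]
    · intro c a
      show ψ (c • (a : PSer K)) = _
      rw [hψ.linear.map_smul]
  have hBlin : IsLinearMap K (fun f : Kx K => f.1) := ⟨fun _ _ => rfl, fun _ _ => rfl⟩
  apply dense_eq hAlin hBlin (contwrt_comp cont_coe hψ.cont) cont_coe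
  intro S hS
  show ψ (mono S) = mono S
  match S with
  | none => exact hψ.map_one
  | some t => exact substHom_mono hψ t hS

/-! ### The expansion of ψ (d (bulletX fs)) -/

lemma exp_lemma {h : PSer K} {ψ : PSer K → PSer K} (hψ : IsSubstHom Xps h ψ)
    {d : Kx K → PSer K} (hd : IsUDeriv d) (fs : List (Kx K)) (hlen : 2 ≤ fs.length) :
    ψ (d (bulletX fs)) = ∑ i : Fin fs.length,
      bullet ((fs.map (fun f => f.1)).set i.1 (ψ (d (fs.get i)))) := by
  rw [hd.leibniz fs hlen, lin_sum hψ.linear]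
  refine Finset.sum_congr rfl fun i _ => ?_
  rw [hψ.map_graft _ (by rw [List.length_set, List.length_map]; exact hlen)]
  rw [List.map_set]
  have : (fs.map (fun f => f.1)).map ψ = fs.map (fun f => f.1) := by
    simp only [List.map_map]
    apply List.map_congr_left
    intro v _
    exact substHom_id hψ v
  rw [this]

lemma exp_lemma' {h : PSer K} {ψ : PSer K → PSer K} (hψ : IsSubstHom Xps h ψ)
    {d : Kx K → PSer K} (hd : IsUDeriv d) (fs : List (Kx K)) (hlen : 2 ≤ fs.length)
    (n : ℕ) (hn : fs.length = n) :
    ψ (d (bulletX fs)) = ∑ i : Fin n,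
      bullet ((fs.map (fun f => f.1)).set i.1 (ψ (d (fs[i.1]'(hn ▸ i.2))))) := by
  subst hn
  rw [exp_lemma hψ hd fs hlen]
  exact Finset.sum_congr rfl fun i _ => by rw [List.get_eq_getElem]

/-! ### d applied to the unit -/

lemma graft_pair_none_right (u : PT) : graft [u, none] = u := by
  cases u <;> rfl

lemma graft_pair_none_left (u : PT) : graft [none, u] = u := by
  cases u <;> rfl

open Classical in
lemma bullet_one_right (a : PSer K) : bullet [a, onePS] = a := by
  apply Subtype.ext
  funext S
  rw [bullet_apply]
  unfold bulletCoeff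
  rw [finsum_mem_single ([S, none] : List PT) ?_]
  · rw [if_pos (by exact ⟨rfl, graft_pair_none_right S⟩)]
    show a.1 S * ((mono none).1 none * 1) = a.1 S
    rw [mono_apply, if_pos rfl]
    ring
  · rintro t ⟨ht1, ht2⟩ hne
    obtain ⟨u, w, rfl⟩ := List.length_eq_two.mp ht1
    show a.1 u * ((mono none).1 w * 1) = 0
    rw [mono_apply]
    by_cases hw : w = none
    · subst hw
      rw [graft_pair_none_right] at ht2
      exact absurd (by rw [ht2]) hne
    · rw [if_neg hw]
      ring
  
open Classical in
lemma bullet_one_left (a : PSer K) : bullet [onePS, a] = a := by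
  apply Subtype.ext
  funext S
  rw [bullet_apply]
  unfold bulletCoeff
  rw [finsum_mem_single ([none, S] : List PT) ?_]
  · rw [if_pos (by exact ⟨rfl, graft_pair_none_left S⟩)]
    show (mono none).1 none * (a.1 S * 1) = a.1 S
    rw [mono_apply, if_pos rfl]
    ring
  · rintro t ⟨ht1, ht2⟩ hne
    obtain ⟨u, w, rfl⟩ := List.length_eq_two.mp ht1
    show (mono none).1 u * (a.1 w * 1) = 0
    rw [mono_apply]
    by_cases hu : u = none
    · subst hu
      rw [graft_pair_none_left] at ht2
      exact absurd (by rw [ht2]) hne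
    · rw [if_neg hu]
      ring

lemma d_oneX {d : Kx K → PSer K} (hd : IsUDeriv d) : d oneX = 0 := by
  have h1 : bulletX [oneX, oneX] = (oneX : Kx K) := by
    apply Subtype.ext
    rw [bulletX_coe]
    show bullet [onePS, onePS] = onePS
    exact bullet_one_left onePS
  have h2 := hd.leibniz [oneX, oneX] (by simp)
  rw [h1] at h2
  have hstep : (∑ i : Fin ([oneX, oneX] : List (Kx K)).length,
      bullet ((List.map (fun f => f.1) [oneX, oneX]).set i.1
        (d (([oneX, oneX] : List (Kx K)).get i))))
      = bullet [d oneX, onePS] + bullet [onePS, d oneX] := by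
    show ∑ i : Fin 2, bullet ((List.map (fun f => f.1) [oneX, oneX]).set i.1
      (d (([oneX, oneX] : List (Kx K)).get i))) = _
    rw [Fin.sum_univ_two]
    rfl
  have h3 : d oneX = bullet [d oneX, onePS] + bullet [onePS, d oneX] := h2.trans hstep
  rw [bullet_one_right, bullet_one_left] at h3
  exact add_eq_left.mp h3.symm

/-! ### Odds and ends -/

lemma lin_zero {M N : Type*} [AddCommGroup M] [Module K M] [AddCommGroup N] [Module K N]
    {φ : M → N} (hφ : IsLinearMap K φ) : φ 0 = 0 := (hφ.mk' φ).map_zero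

lemma countLeaf_leaf (v w : PVar) :
    PTree.countLeaf v (.leaf w) = if w = v then 1 else 0 := by
  rw [PTree.countLeaf]

lemma monoX_none (h : degy (none : PT) = 0) : monoX (K := K) none h = oneX :=
  Subtype.ext rfl

lemma monoX_some {t : PTree} (hS : degy (some t) = 0) :
    monoX (K := K) (some t) hS = monoXt t :=
  Subtype.ext (monoXt_coe hS).symm

lemma monoXt_leafx : monoXt (K := K) (.leaf .vx) = xX :=
  Subtype.ext (monoXt_coe (by simp [countLeaf_leaf]))

lemma countLeaf_leafy_ne : PTree.countLeaf .vy (.leaf .vy) ≠ 0 := by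
  simp [countLeaf_leaf]

/-! ### The splitting ψ_{(x,1+x)} ∘ d = ψ_{(x,1)} ∘ d + ψ_{(x,x)} ∘ d -/

lemma psi_split {d : Kx K → PSer K} (hd : IsUDeriv d)
    {ψa ψb ψc : PSer K → PSer K}
    (hψa : IsSubstHom Xps (onePS + Xps) ψa) (hψb : IsSubstHom Xps onePS ψb)
    (hψc : IsSubstHom Xps Xps ψc) :
    ∀ f : Kx K, ψa (d f) = ψb (d f) + ψc (d f) := by
  have hAlin : IsLinearMap K (fun f : Kx K => ψa (d f)) :=
    ⟨fun a b => by rw [hd.linear.map_add, hψa.linear.map_add],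
     fun c a => by rw [hd.linear.map_smul, hψa.linear.map_smul]⟩
  have hBlin : IsLinearMap K (fun f : Kx K => ψb (d f) + ψc (d f)) := by
    constructor
    · intro a b
      rw [hd.linear.map_add, hψb.linear.map_add, hψc.linear.map_add]
      abel
    · intro c a
      rw [hd.linear.map_smul, hψb.linear.map_smul, hψc.linear.map_smul, smul_add]
  have hAc : ContWrt distKx distx (fun f : Kx K => ψa (d f)) :=
    contwrt_comp hd.cont hψa.cont
  have hBc : ContWrt distKx distx (fun f : Kx K => ψb (d f) + ψc (d f)) :=
    contwrt_add (contwrt_comp hd.cont hψb.cont) (contwrt_comp hd.cont hψc.cont)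
  have key : ∀ t : PTree, PTree.countLeaf .vy t = 0 →
      ψa (d (monoXt t)) = ψb (d (monoXt t)) + ψc (d (monoXt t)) := by
    intro t
    induction t using ptree_ind with
    | hleaf v =>
      intro h0
      cases v
      · rw [monoXt_leafx, hd.map_X, hψa.map_Y, hψb.map_Y, hψc.map_Y]
      · exact absurd h0 countLeaf_leafy_ne
    | hnode t1 t2 ts ih1 ih2 ihs =>
      intro h0
      obtain ⟨hc1, hc2, hc3⟩ := countLeaf_vy_children h0
      rw [monoXt_node h0]
      set fs : List (Kx K) := (t1 :: t2 :: ts).map monoXt with hfs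
      have hlen : 2 ≤ fs.length := by rw [hfs]; simp
      have hIH : ∀ i : Fin fs.length,
          ψa (d (fs.get i)) = ψb (d (fs.get i)) + ψc (d (fs.get i)) := by
        intro i
        have hmem : fs.get i ∈ fs := List.get_mem fs i
        obtain ⟨u, hu, hequ⟩ := List.mem_map.mp hmem
        rw [← hequ]
        simp only [List.mem_cons] at hu
        rcases hu with rfl | rfl | hu
        · exact ih1 hc1
        · exact ih2 hc2
        · exact ihs u hu (hc3 u hu)
      rw [exp_lemma hψa hd fs hlen, exp_lemma hψb hd fs hlen, exp_lemma hψc hd fs hlen]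
      rw [← Finset.sum_add_distrib]
      refine Finset.sum_congr rfl fun i _ => ?_
      rw [hIH i]
      exact bullet_set_add _ i.1 (by simpa using i.2) _ _
  apply dense_eq hAlin hBlin hAc hBc
  intro S hS
  match S with
  | none =>
    rw [monoX_none, d_oneX hd, lin_zero hψa.linear, lin_zero hψb.linear, lin_zero hψc.linear,
      add_zero]
  | some t =>
    rw [monoX_some]
    exact key t hS
end Planar

open Planar in
/-- Special chain rule: let `g ∈ K{{x}}`, `ord_x(g) ≥ 1`, with
`g' = 1 + g`. Then for every `f ∈ K{{x}}`,
`(d/dx)(f(g(x))) = f'(g(x)) + ((x d/dx)(f))(g(x)) = (((1+x) d/dx)(f))(g(x))`.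
Here `D = d/dx = φ_{(x,1)} ∘ d`, `T = (x d/dx) = φ_{(x,x)} ∘ d`,
`T1 = ((1+x) d/dx) = φ_{(x,1+x)} ∘ d`, and `φg = φ_g` is substitution of `g`. -/
theorem planar_special_chain_rule (K : Type) [Field K]
    (g : Kx K) (hg : 1 ≤ ordx g.1)
    (φg : Kx K → Kx K) (hφg : IsSubstHomX g φg)
    (d : Kx K → PSer K) (hd : IsUDeriv d)
    (ψ1 ψx ψ1x : PSer K → PSer K)
    (hψ1 : IsSubstHom Xps onePS ψ1)
    (hψx : IsSubstHom Xps Xps ψx)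
    (hψ1x : IsSubstHom Xps (onePS + Xps) ψ1x)
    (D T T1 : Kx K → Kx K)
    (hD : ∀ f : Kx K, (D f).1 = ψ1 (d f))
    (hT : ∀ f : Kx K, (T f).1 = ψx (d f))
    (hT1 : ∀ f : Kx K, (T1 f).1 = ψ1x (d f))
    (hg' : D g = oneX + g) :
    ∀ f : Kx K, D (φg f) = φg (D f) + φg (T f) ∧ D (φg f) = φg (T1 f) := by

  -- `T1` as a self-map of `K{{x}}` is linear and continuous
  have hT1lin : IsLinearMap K T1 := by
    constructor
    · intro a b
      apply Subtype.ext
      show (T1 (a + b)).1 = ((T1 a + T1 b : Kx K) : PSer K)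
      rw [Submodule.coe_add, hT1, hT1, hT1, hd.linear.map_add, hψ1x.linear.map_add]
    · intro c a
      apply Subtype.ext
      show (T1 (c • a)).1 = ((c • T1 a : Kx K) : PSer K)
      rw [Submodule.coe_smul, hT1, hT1, hd.linear.map_smul, hψ1x.linear.map_smul]
  have hT1cont : ContWrt distKx distKx T1 :=
    contKx_of_coe hT1 (contwrt_comp hd.cont hψ1x.cont)
  have hT1one : T1 oneX = 0 := by
    apply Subtype.ext
    rw [hT1, d_oneX hd, lin_zero hψ1x.linear]
    rfl
  have hT1x : T1 xX = oneX + xX := by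
    apply Subtype.ext
    rw [hT1, hd.map_X, hψ1x.map_Y, Submodule.coe_add]
    rfl
  -- the special chain rule in the 1+x form, at the level of coefficients
  have hQcoe : ∀ f : Kx K, ψ1 (d (φg f)) = (φg (T1 f)).1 := by
    have hAlin : IsLinearMap K (fun f : Kx K => ψ1 (d (φg f))) :=
      ⟨fun a b => by rw [hφg.linear.map_add, hd.linear.map_add, hψ1.linear.map_add],
       fun c a => by rw [hφg.linear.map_smul, hd.linear.map_smul, hψ1.linear.map_smul]⟩
    have hBlin : IsLinearMap K (fun f : Kx K => (φg (T1 f)).1) := by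
      constructor
      · intro a b
        rw [hT1lin.map_add, hφg.linear.map_add, Submodule.coe_add]
      · intro c a
        rw [hT1lin.map_smul, hφg.linear.map_smul, Submodule.coe_smul]
    have hAc : ContWrt distKx distx (fun f : Kx K => ψ1 (d (φg f))) :=
      contwrt_comp (φ := φg) (χ := fun h => ψ1 (d h)) hφg.cont
        (contwrt_comp hd.cont hψ1.cont)
    have hBc : ContWrt distKx distx (fun f : Kx K => (φg (T1 f)).1) :=
      contwrt_comp (φ := fun f => φg (T1 f)) (χ := fun f => f.1)
        (contwrt_comp hT1cont hφg.cont) cont_coe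
    have key : ∀ t : PTree, PTree.countLeaf .vy t = 0 →
        ψ1 (d (φg (monoXt t))) = (φg (T1 (monoXt t))).1 := by
      intro t
      induction t using ptree_ind with
      | hleaf v =>
        intro h0
        cases v
        · rw [monoXt_leafx, hφg.map_X, hT1x, hφg.linear.map_add, hφg.map_one, hφg.map_X,
            show ψ1 (d g) = ((D g : Kx K) : PSer K) from (hD g).symm, hg']
        · exact absurd h0 countLeaf_leafy_ne
      | hnode t1 t2 ts ih1 ih2 ihs =>
        intro h0
        obtain ⟨hc1, hc2, hc3⟩ := countLeaf_vy_children h0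
        rw [monoXt_node h0]
        set fs : List (Kx K) := (t1 :: t2 :: ts).map monoXt with hfs
        have hlen : 2 ≤ fs.length := by rw [hfs]; simp
        have hIH : ∀ i : Fin fs.length,
            ψ1 (d (φg (fs.get i))) = (φg (T1 (fs.get i))).1 := by
          intro i
          have hmem : fs.get i ∈ fs := List.get_mem fs i
          obtain ⟨u, hu, hequ⟩ := List.mem_map.mp hmem
          rw [← hequ]
          simp only [List.mem_cons] at hu
          rcases hu with rfl | rfl | hu
          · exact ih1 hc1
          · exact ih2 hc2
          · exact ihs u hu (hc3 u hu)
        have hT1bul : T1 (bulletX fs) = ∑ i : Fin fs.length,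
            bulletX (fs.set i.1 (T1 (fs.get i))) := by
          apply Subtype.ext
          rw [hT1, exp_lemma hψ1x hd fs hlen, kx_coe_sum]
          refine Finset.sum_congr rfl fun i _ => ?_
          rw [bulletX_coe, List.map_set, ← hT1]
        rw [hφg.map_graft fs hlen,
          exp_lemma' hψ1 hd (fs.map φg) (by simpa using hlen) fs.length (by simp),
          hT1bul, lin_sum hφg.linear, kx_coe_sum]
        refine Finset.sum_congr rfl fun i _ => ?_
        rw [hφg.map_graft _ (by simpa using hlen), List.map_set, bulletX_coe, List.map_set]
        rw [List.getElem_map]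
        simp only [List.get_eq_getElem] at hIH
        rw [hIH i]
        simp only [List.get_eq_getElem]
    apply dense_eq hAlin hBlin hAc hBc
    intro S hS
    match S with
    | none =>
      rw [monoX_none, hφg.map_one, d_oneX hd, lin_zero hψ1.linear, hT1one,
        lin_zero hφg.linear]
      rfl
    | some t =>
      rw [monoX_some]
      exact key t hS
  have hQ : ∀ f : Kx K, D (φg f) = φg (T1 f) := fun f =>
    Subtype.ext (by rw [hD]; exact hQcoe f)
  have hsplit := psi_split hd hψ1x hψ1 hψx
  have hT1sum : ∀ f : Kx K, T1 f = D f + T f := fun f => Subtype.ext (by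
    rw [Submodule.coe_add, hT1, hD, hT]
    exact hsplit f)
  intro f
  refine ⟨?_, hQ f⟩
  rw [hQ f, hT1sum f, hφg.linear.map_add]
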